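/- Let h, q : ℝⁿ → ℝ be twice continuously differentiable with q convex, and suppose −ℓ I ⪯ ∇²h(x) + ∇²q(x) ⪯ ℓ I for all x and some ℓ > 0. Let P : ℝⁿ → (−∞, ∞] be proper and closed, let β ∈ (0, 1/ℓ), and suppose x⁺ minimizes y ↦ ⟨∇h(x), y − x⟩ + (1/(2β))‖y − x‖² + P(y). Then h(x⁺) + P(x⁺) ≤ h(x) + P(x) − (1/(2β) − ℓ/2)‖x⁺ − x‖². -/

import Mathlib

open scoped RealInnerProductSpace

/-- Descent property of one proximal gradient step under the relaxed step-size rule: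
if `q` is convex, `−ℓ I ⪯ ∇²h + ∇²q ⪯ ℓ I`, `P` is proper closed, `β ∈ (0, 1/ℓ)`, and
`x⁺` minimizes `y ↦ ⟨∇h(x), y − x⟩ + (1/(2β))‖y − x‖² + P(y)`, then
`h(x⁺) + P(x⁺) ≤ h(x) + P(x) − (1/(2β) − ℓ/2)‖x⁺ − x‖²`. -/
theorem prox_grad_step_descent {n : ℕ}
    (h q : EuclideanSpace ℝ (Fin n) → ℝ)
    (gradh gradq : EuclideanSpace ℝ (Fin n) → EuclideanSpace ℝ (Fin n))
    (Hh Hq : EuclideanSpace ℝ (Fin n) → (EuclideanSpace ℝ (Fin n) →L[ℝ] EuclideanSpace ℝ (Fin n)))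
    (P : EuclideanSpace ℝ (Fin n) → EReal)
    (ℓ β : ℝ) (hℓ : 0 < ℓ) (hβ : β ∈ Set.Ioo (0 : ℝ) (1 / ℓ))
    (hgradh : ∀ x, HasGradientAt h (gradh x) x)
    (hgradq : ∀ x, HasGradientAt q (gradq x) x)
    (hHh : ∀ x, HasFDerivAt gradh (Hh x) x) (hHhc : Continuous Hh)
    (hHq : ∀ x, HasFDerivAt gradq (Hq x) x) (hHqc : Continuous Hq)
    (hqconv : ConvexOn ℝ Set.univ q)
    (hbd : ∀ x v, -ℓ * ‖v‖ ^ 2 ≤ ⟪v, (Hh x) v + (Hq x) v⟫ ∧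
      ⟪v, (Hh x) v + (Hq x) v⟫ ≤ ℓ * ‖v‖ ^ 2)
    (hProper : ∃ y, P y ≠ ⊤) (hNoBot : ∀ y, P y ≠ ⊥) (hlsc : LowerSemicontinuous P)
    (x xp : EuclideanSpace ℝ (Fin n))
    (hx : P x ≠ ⊤)
    (hmin : ∀ y, ((⟪gradh x, xp - x⟫ + (1 / (2 * β)) * ‖xp - x‖ ^ 2 : ℝ) : EReal) + P xp ≤
      ((⟪gradh x, y - x⟫ + (1 / (2 * β)) * ‖y - x‖ ^ 2 : ℝ) : EReal) + P y) :
    ((h xp : ℝ) : EReal) + P xp ≤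
      ((h x : ℝ) : EReal) + P x - (((1 / (2 * β) - ℓ / 2) * ‖xp - x‖ ^ 2 : ℝ) : EReal) := by
  set v := xp - x with hv
  set L : ℝ → EuclideanSpace ℝ (Fin n) := fun t => x + t • v with hL
  have hL0 : L 0 = x := by simp [hL]
  have hL1 : L 1 = xp := by simp [hL, hv]
  have hLd : ∀ t : ℝ, HasDerivAt L v t := by
    intro t
    simpa [hL] using ((hasDerivAt_id t).smul_const v).const_add x
  -- f = h + q, its gradient and Hessian
  set f : EuclideanSpace ℝ (Fin n) → ℝ := fun y => h y + q y with hf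
  set gradf : EuclideanSpace ℝ (Fin n) → EuclideanSpace ℝ (Fin n) :=
    fun y => gradh y + gradq y with hgf
  have hgradf : ∀ y, HasGradientAt f (gradf y) y := by
    intro y
    have : HasFDerivAt f (InnerProductSpace.toDual ℝ _ (gradf y)) y := by
      simp only [hgf, map_add]
      exact (hgradh y).hasFDerivAt.add (hgradq y).hasFDerivAt
    simpa using this.hasGradientAt
  have hHf : ∀ y, HasFDerivAt gradf ((Hh y) + (Hq y)) y := fun y => (hHh y).add (hHq y)
  -- φ and ψ
  set φ : ℝ → ℝ := fun t => f (L t) with hφ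
  set ψ : ℝ → ℝ := fun t => ⟪gradf (L t), v⟫ with hψ
  have hφd : ∀ t : ℝ, HasDerivAt φ (ψ t) t := by
    intro t
    have := ((hgradf (L t)).hasFDerivAt).comp_hasDerivAt t (hLd t)
    simp [hφ, hψ, InnerProductSpace.toDual_apply_apply] at this
    exact this
  have hψd : ∀ t : ℝ, HasDerivAt ψ (⟪(Hh (L t) + Hq (L t)) v, v⟫) t := by
    intro t
    have h1 : HasDerivAt (fun s => gradf (L s)) ((Hh (L t) + Hq (L t)) v) t :=
      (hHf (L t)).comp_hasDerivAt t (hLd t)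
    have := h1.inner ℝ (hasDerivAt_const t v)
    simpa [hψ] using this
  have hψbd : ∀ t : ℝ, ‖⟪(Hh (L t) + Hq (L t)) v, v⟫‖ ≤ ℓ * ‖v‖ ^ 2 := by
    intro t
    have hb := hbd (L t) v
    rw [real_inner_comm]
    rw [Real.norm_eq_abs, abs_le]
    constructor
    · have := hb.1; simpa [ContinuousLinearMap.add_apply, neg_mul] using this
    · have := hb.2; simpa [ContinuousLinearMap.add_apply] using this
  -- ψ t - ψ 0 ≤ ℓ ‖v‖² t on [0,1]
  have hψle : ∀ t ∈ Set.Icc (0:ℝ) 1, ψ t - ψ 0 ≤ ℓ * ‖v‖ ^ 2 * t := by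
    intro t ht
    have := Convex.norm_image_sub_le_of_norm_hasDerivWithin_le
      (f := ψ) (f' := fun s => ⟪(Hh (L s) + Hq (L s)) v, v⟫)
      (s := Set.Icc (0:ℝ) 1) (C := ℓ * ‖v‖ ^ 2)
      (fun s _ => (hψd s).hasDerivWithinAt) (fun s _ => hψbd s)
      (convex_Icc 0 1) (Set.left_mem_Icc.2 zero_le_one) ht
    have h2 : ψ t - ψ 0 ≤ ‖ψ t - ψ 0‖ := le_abs_self _
    have h3 : ‖t - 0‖ = t := by
      rw [sub_zero, Real.norm_eq_abs, abs_of_nonneg ht.1]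
    calc ψ t - ψ 0 ≤ ‖ψ t - ψ 0‖ := h2
      _ ≤ ℓ * ‖v‖ ^ 2 * ‖t - 0‖ := this
      _ = ℓ * ‖v‖ ^ 2 * t := by rw [h3]
  -- χ is antitone on [0,1]
  set χ : ℝ → ℝ := fun t => φ t - φ 0 - t * ψ 0 - ℓ / 2 * ‖v‖ ^ 2 * t ^ 2 with hχ
  have hχd : ∀ t : ℝ, HasDerivAt χ (ψ t - ψ 0 - ℓ * ‖v‖ ^ 2 * t) t := by
    intro t
    have h1 : HasDerivAt (fun s : ℝ => φ s - φ 0 - s * ψ 0 - ℓ / 2 * ‖v‖ ^ 2 * s ^ 2)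
        (ψ t - 0 - (1 * ψ 0) - ℓ / 2 * ‖v‖ ^ 2 * (2 * t ^ 1)) t := by
      exact (((hφd t).sub (hasDerivAt_const t (φ 0))).sub
        ((hasDerivAt_id t).mul_const (ψ 0))).sub
        ((hasDerivAt_pow 2 t).const_mul (ℓ / 2 * ‖v‖ ^ 2))
    convert h1 using 1
    ring
  have hanti : AntitoneOn χ (Set.Icc (0:ℝ) 1) := by
    apply antitoneOn_of_deriv_nonpos (convex_Icc 0 1)
    · exact fun t _ => ((hχd t).continuousAt).continuousWithinAt
    · exact fun t _ => ((hχd t).differentiableAt).differentiableWithinAt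
    · intro t ht
      rw [interior_Icc] at ht
      rw [(hχd t).deriv]
      have := hψle t ⟨le_of_lt ht.1, le_of_lt ht.2⟩
      linarith
  have hχ1 : χ 1 ≤ χ 0 := hanti (Set.left_mem_Icc.2 zero_le_one)
    (Set.right_mem_Icc.2 zero_le_one) zero_le_one
  have hχ0 : χ 0 = 0 := by simp [hχ]
  -- descent for f
  have hfdesc : f xp ≤ f x + ⟪gradf x, v⟫ + ℓ / 2 * ‖v‖ ^ 2 := by
    have := hχ1
    rw [hχ0] at this
    simp only [hχ, hφ, hψ, hL0, hL1, one_mul, one_pow] at this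
    linarith
  -- convexity first-order bound for q
  have hqlb : q x + ⟪gradq x, v⟫ ≤ q xp := by
    by_cases hvz : v = 0
    · have : xp = x := by rwa [hv, sub_eq_zero] at hvz
      simp [this, hvz]
    · set g : ℝ → ℝ := fun t => q (L t) with hg
      have hgeq : g = q ∘ (AffineMap.lineMap x xp : ℝ →ᵃ[ℝ] EuclideanSpace ℝ (Fin n)) := by
        funext t
        simp only [hg, Function.comp_apply, AffineMap.lineMap_apply_module, hL]
        congr 1
        rw [hv]
        module
      have hgconv : ConvexOn ℝ Set.univ g := by
        rw [hgeq]
        have := hqconv.comp_affineMap (AffineMap.lineMap x xp : ℝ →ᵃ[ℝ] EuclideanSpace ℝ (Fin n))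
        rwa [Set.preimage_univ] at this
      have hgd : HasDerivAt g ⟪gradq x, v⟫ 0 := by
        have := ((hgradq (L 0)).hasFDerivAt).comp_hasDerivAt 0 (hLd 0)
        simp [hg, hL0, InnerProductSpace.toDual_apply_apply] at this
        exact this
      have := hgconv.le_slope_of_hasDerivAt (Set.mem_univ 0) (Set.mem_univ 1)
        zero_lt_one hgd
      rw [slope_def_field] at this
      simp only [hg, hL0, hL1] at this
      have h1 : (q xp - q x) / (1 - 0) = q xp - q x := by norm_num
      rw [h1] at this
      linarith
  -- descent for h
  have hhdesc : h xp ≤ h x + ⟪gradh x, v⟫ + ℓ / 2 * ‖v‖ ^ 2 := by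
    have := hfdesc
    simp only [hf, hgf, inner_add_left] at this
    linarith
  -- EReal bookkeeping
  set a : ℝ := ⟪gradh x, v⟫ + (1 / (2 * β)) * ‖v‖ ^ 2 with ha
  have hmx := hmin x
  have hmx' : (a : EReal) + P xp ≤ P x := by
    have h0 : ((⟪gradh x, x - x⟫ + (1 / (2 * β)) * ‖x - x‖ ^ 2 : ℝ) : EReal) = (0 : ℝ) := by
      norm_num
    rw [h0] at hmx
    simpa using hmx
  have hxpne : P xp ≠ ⊤ := by
    intro hT
    rw [hT] at hmx'
    have : (a : EReal) + ⊤ = ⊤ := by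
      rw [EReal.add_top_iff_ne_bot]; exact EReal.coe_ne_bot a
    rw [this] at hmx'
    exact hx (top_le_iff.1 hmx')
  obtain ⟨px, hpx⟩ : ∃ px : ℝ, P x = (px : EReal) :=
    ⟨(P x).toReal, (EReal.coe_toReal hx (hNoBot x)).symm⟩
  obtain ⟨pxp, hpxp⟩ : ∃ pxp : ℝ, P xp = (pxp : EReal) :=
    ⟨(P xp).toReal, (EReal.coe_toReal hxpne (hNoBot xp)).symm⟩
  rw [hpx, hpxp] at hmx' ⊢
  rw [← EReal.coe_add] at hmx'
  have hreal : a + pxp ≤ px := EReal.coe_le_coe_iff.1 hmx'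
  rw [← EReal.coe_add, ← EReal.coe_add, ← EReal.coe_sub]
  rw [EReal.coe_le_coe_iff]
  have hβ0 : 0 < β := hβ.1
  rw [ha] at hreal
  nlinarith [hhdesc, hreal]
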